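/- If {x_n} is a log-convex sequence of nonnegative real numbers, then the Stirling transform of the second kind z_n = ∑_{k=0}^{n} S(n,k) x_k is log-convex, where S(n,k) denotes the Stirling numbers of the second kind. -/

import Mathlib

def LogConvex (a : ℕ → ℝ) : Prop := ∀ n : ℕ, a n * a (n + 2) ≥ a (n + 1) ^ 2

/-- Stirling numbers of the second kind. -/
def stirling2 : ℕ → ℕ → ℕ
  | 0, 0 => 1
  | 0, _ + 1 => 0
  | _ + 1, 0 => 0
  | n + 1, k + 1 => (k + 1) * stirling2 n (k + 1) + stirling2 n k

open Finset

lemma stirling2_zero_of_lt : ∀ n k, n < k → stirling2 n k = 0 := by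
  intro n
  induction n with
  | zero =>
    intro k h
    match k, h with
    | k+1, _ => rfl
  | succ n ih =>
    intro k h
    match k, h with
    | k+1, h =>
      show (k + 1) * stirling2 n (k + 1) + stirling2 n k = 0
      rw [ih (k+1) (by omega), ih k (by omega)]
      simp

lemma stirling2_succ (n k : ℕ) :
    stirling2 (n+1) (k+1) = (k + 1) * stirling2 n (k + 1) + stirling2 n k := rfl

lemma stirling2_zero_right (n : ℕ) : stirling2 (n+1) 0 = 0 := rfl

lemma stirling2_one (n : ℕ) : stirling2 (n+1) 1 = 1 := by
  induction n with
  | zero => rfl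
  | succ n ih => rw [stirling2_succ, ih, stirling2_zero_right]

lemma stirling2_id (n k : ℕ) :
    stirling2 (n+1) (k+1) = ∑ j ∈ range (n+1), Nat.choose n j * stirling2 j k := by
  induction n generalizing k with
  | zero => cases k <;> simp [stirling2]
  | succ n ih =>
    rw [Finset.sum_range_succ' (fun j => Nat.choose (n+1) j * stirling2 j k) (n+1)]
    cases k with
    | zero =>
      simp only [stirling2_zero_right, Nat.mul_zero, Finset.sum_const_zero, Nat.zero_add,
        Nat.choose_zero_right, Nat.one_mul]
      show stirling2 (n+2) 1 = stirling2 0 0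
      rw [stirling2_one]; rfl
    | succ k =>
      have hrec : ∀ j, stirling2 (j+1) (k+1) = (k+1) * stirling2 j (k+1) + stirling2 j k :=
        fun j => rfl
      have h3 : ∑ j ∈ range (n+1), Nat.choose n (j+1) * stirling2 (j+1) (k+1)
          = ∑ j ∈ range (n+1), Nat.choose n j * stirling2 j (k+1) := by
        have e := Finset.sum_range_succ' (fun j => Nat.choose n j * stirling2 j (k+1)) (n+1)
        rw [Finset.sum_range_succ] at e
        simp only [stirling2_zero_of_lt 0 (k+1) (by omega), Nat.choose_succ_self,
          Nat.mul_zero, Nat.zero_mul, Nat.add_zero, Nat.zero_add] at e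
        exact e.symm
      show stirling2 (n+1+1) (k+1+1)
          = (∑ j ∈ range (n+1), Nat.choose (n+1) (j+1) * stirling2 (j+1) (k+1))
            + Nat.choose (n+1) 0 * stirling2 0 (k+1)
      have hz : Nat.choose (n+1) 0 * stirling2 0 (k+1) = 0 := by
        simp [stirling2_zero_of_lt 0 (k+1) (by omega)]
      rw [hz, Nat.add_zero]
      calc stirling2 (n+1+1) (k+1+1)
          = (k+1+1) * stirling2 (n+1) (k+1+1) + stirling2 (n+1) (k+1) := rfl
        _ = (k+2) * ∑ j ∈ range (n+1), Nat.choose n j * stirling2 j (k+1)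
            + ∑ j ∈ range (n+1), Nat.choose n j * stirling2 j k := by
            rw [ih (k+1), ih k]
        _ = (∑ j ∈ range (n+1), Nat.choose n j * ((k+1) * stirling2 j (k+1) + stirling2 j k))
            + ∑ j ∈ range (n+1), Nat.choose n j * stirling2 j (k+1) := by
            rw [Finset.mul_sum, ← Finset.sum_add_distrib, ← Finset.sum_add_distrib]
            exact Finset.sum_congr rfl fun j _ => by ring
        _ = (∑ j ∈ range (n+1), Nat.choose n j * stirling2 (j+1) (k+1))
            + ∑ j ∈ range (n+1), Nat.choose n (j+1) * stirling2 (j+1) (k+1) := by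
            rw [h3]
            simp only [hrec]
        _ = ∑ j ∈ range (n+1), (Nat.choose n j + Nat.choose n (j+1)) * stirling2 (j+1) (k+1) := by
            rw [← Finset.sum_add_distrib]
            exact Finset.sum_congr rfl fun j _ => by ring
        _ = ∑ j ∈ range (n+1), Nat.choose (n+1) (j+1) * stirling2 (j+1) (k+1) := by
            exact Finset.sum_congr rfl fun j _ => by rw [Nat.choose_succ_succ']

lemma pascal_sum (f : ℕ → ℝ) (n : ℕ) :
    ∑ j ∈ range (n+2), (Nat.choose (n+1) j : ℝ) * f j
      = ∑ j ∈ range (n+1), (Nat.choose n j : ℝ) * f j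
        + ∑ j ∈ range (n+1), (Nat.choose n j : ℝ) * f (j+1) := by
  rw [Finset.sum_range_succ' (fun j => (Nat.choose (n+1) j : ℝ) * f j) (n+1)]
  simp only [Nat.choose_succ_succ', Nat.cast_add, add_mul, Nat.choose_zero_right,
    Nat.cast_one, one_mul]
  rw [Finset.sum_add_distrib]
  have h : ∑ j ∈ range (n+1), (Nat.choose n (j+1):ℝ) * f (j+1) + f 0
      = ∑ j ∈ range (n+1), (Nat.choose n j : ℝ) * f j := by
    have e := Finset.sum_range_succ' (fun j => (Nat.choose n j : ℝ) * f j) n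
    rw [Finset.sum_range_succ (fun j => (Nat.choose n (j+1):ℝ) * f (j+1)) n]
    simp only [Nat.choose_succ_self, Nat.cast_zero, zero_mul, add_zero,
      Nat.choose_zero_right, Nat.cast_one, one_mul] at e ⊢
    linarith [e]
  linarith [h]

lemma cauchy_step (y : ℕ → ℝ) (hy0 : ∀ j, 0 ≤ y j) (m : ℕ)
    (hy : ∀ j, j ≤ m → y (j+1)^2 ≤ y j * y (j+2)) :
    (∑ j ∈ range (m+1), (Nat.choose m j : ℝ) * y (j+1))^2
      ≤ (∑ j ∈ range (m+1), (Nat.choose m j : ℝ) * y j)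
        * (∑ j ∈ range (m+1), (Nat.choose m j : ℝ) * y (j+2)) := by
  have hnn : ∀ (t j : ℕ), (0:ℝ) ≤ (Nat.choose m j : ℝ) * y (j+t) :=
    fun t j => mul_nonneg (Nat.cast_nonneg _) (hy0 _)
  have hnn0 : ∀ (j : ℕ), (0:ℝ) ≤ (Nat.choose m j : ℝ) * y j :=
    fun j => mul_nonneg (Nat.cast_nonneg _) (hy0 _)
  have h1 : ∑ j ∈ range (m+1), (Nat.choose m j : ℝ) * y (j+1)
      ≤ ∑ j ∈ range (m+1),
          Real.sqrt ((Nat.choose m j : ℝ) * y j) * Real.sqrt ((Nat.choose m j : ℝ) * y (j+2)) := by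
    refine Finset.sum_le_sum fun j hj => ?_
    rw [← Real.sqrt_mul (hnn0 j)]
    have e : (Nat.choose m j : ℝ) * y (j+1)
        = Real.sqrt (((Nat.choose m j : ℝ) * y (j+1))^2) := by
      rw [Real.sqrt_sq (hnn 1 j)]
    rw [e]
    apply Real.sqrt_le_sqrt
    have hj' := hy j (Nat.lt_succ_iff.mp (Finset.mem_range.mp hj))
    have hc : (0:ℝ) ≤ (Nat.choose m j : ℝ) := Nat.cast_nonneg _
    nlinarith [hj', hc, sq_nonneg ((Nat.choose m j : ℝ))]
  have h2 := Finset.sum_mul_sq_le_sq_mul_sq (range (m+1))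
    (fun j => Real.sqrt ((Nat.choose m j : ℝ) * y j))
    (fun j => Real.sqrt ((Nat.choose m j : ℝ) * y (j+2)))
  have e0 : ∀ (t : ℕ), ∑ j ∈ range (m+1), (Real.sqrt ((Nat.choose m j : ℝ) * y (j+t)))^2
      = ∑ j ∈ range (m+1), (Nat.choose m j : ℝ) * y (j+t) := by
    intro t
    refine Finset.sum_congr rfl fun j _ => Real.sq_sqrt (hnn t j)
  have e1 : ∑ j ∈ range (m+1), (Real.sqrt ((Nat.choose m j : ℝ) * y j))^2
      = ∑ j ∈ range (m+1), (Nat.choose m j : ℝ) * y j :=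
    Finset.sum_congr rfl fun j _ => Real.sq_sqrt (hnn0 j)
  have e2 := e0 2
  rw [e1, e2] at h2
  have hB : (0:ℝ) ≤ ∑ j ∈ range (m+1), (Nat.choose m j : ℝ) * y (j+1) :=
    Finset.sum_nonneg fun j _ => hnn 1 j
  calc (∑ j ∈ range (m+1), (Nat.choose m j : ℝ) * y (j+1))^2
      ≤ (∑ j ∈ range (m+1),
          Real.sqrt ((Nat.choose m j : ℝ) * y j) * Real.sqrt ((Nat.choose m j : ℝ) * y (j+2)))^2 :=
        pow_le_pow_left₀ hB h1 2
    _ ≤ _ := h2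

noncomputable def Zt (x : ℕ → ℝ) (s n : ℕ) : ℝ :=
  ∑ k ∈ range (n+1), (stirling2 n k : ℝ) * x (k+s)

lemma Zt_nonneg (x : ℕ → ℝ) (hx0 : ∀ n, 0 ≤ x n) (s n : ℕ) : 0 ≤ Zt x s n :=
  Finset.sum_nonneg fun k _ => mul_nonneg (Nat.cast_nonneg _) (hx0 _)

lemma Zt_succ (x : ℕ → ℝ) (s n : ℕ) :
    Zt x s (n+1) = ∑ j ∈ range (n+1), (Nat.choose n j : ℝ) * Zt x (s+1) j := by
  unfold Zt
  rw [Finset.sum_range_succ' (fun k => (stirling2 (n+1) k : ℝ) * x (k+s)) (n+1)]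
  simp only [stirling2_zero_right, Nat.cast_zero, zero_mul, add_zero]
  calc ∑ k ∈ range (n+1), (stirling2 (n+1) (k+1) : ℝ) * x (k+1+s)
      = ∑ k ∈ range (n+1), ∑ j ∈ range (n+1),
          (Nat.choose n j : ℝ) * ((stirling2 j k : ℝ) * x (k+(s+1))) := by
        refine Finset.sum_congr rfl fun k _ => ?_
        have hks : k+1+s = k+(s+1) := by omega
        rw [hks, stirling2_id, Nat.cast_sum, Finset.sum_mul]
        refine Finset.sum_congr rfl fun j _ => ?_
        push_cast
        ring
    _ = ∑ j ∈ range (n+1), ∑ k ∈ range (n+1),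
          (Nat.choose n j : ℝ) * ((stirling2 j k : ℝ) * x (k+(s+1))) := Finset.sum_comm
    _ = ∑ j ∈ range (n+1), (Nat.choose n j : ℝ)
          * ∑ k ∈ range (j+1), (stirling2 j k : ℝ) * x (k+(s+1)) := by
        refine Finset.sum_congr rfl fun j hj => ?_
        rw [← Finset.mul_sum]
        congr 1
        refine (Finset.sum_subset (Finset.range_subset_range.mpr ?_) fun k _ hk => ?_).symm
        · exact Nat.succ_le_succ (Nat.lt_succ_iff.mp (Finset.mem_range.mp hj))
        · have hjk : j < k := by
            have : ¬ k < j + 1 := fun h => hk (Finset.mem_range.mpr h)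
            omega
          rw [stirling2_zero_of_lt j k hjk]
          simp


lemma Zt_logConvex (x : ℕ → ℝ) (hx0 : ∀ n, 0 ≤ x n) (hx : LogConvex x) :
    ∀ n s, Zt x s (n+1) ^ 2 ≤ Zt x s n * Zt x s (n+2) := by
  intro n
  induction n using Nat.strong_induction_on with
  | _ n ih =>
    intro s
    match n with
    | 0 =>
      have h0 : Zt x s 0 = x s := by
        simp [Zt, stirling2]
      have h1 : Zt x s 1 = x (s+1) := by
        simp [Zt, Finset.sum_range_succ, stirling2, Nat.add_comm]
      have h2 : Zt x s 2 = x (s+1) + x (s+2) := by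
        have e0 : stirling2 2 0 = 0 := rfl
        have e1 : stirling2 2 1 = 1 := rfl
        have e2 : stirling2 2 2 = 1 := rfl
        simp [Zt, Finset.sum_range_succ, e0, e1, e2, Nat.add_comm]
      rw [h0, h1, h2]
      have hlc := hx s
      have hn1 := hx0 s
      have hn2 := hx0 (s+1)
      nlinarith [hlc, hn1, hn2, mul_nonneg hn1 hn2]
    | Nat.succ m =>
      have hynn : ∀ j, 0 ≤ Zt x (s+1) j := fun j => Zt_nonneg x hx0 (s+1) j
      have hA : Zt x s (m+1) = ∑ j ∈ range (m+1), (Nat.choose m j : ℝ) * Zt x (s+1) j :=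
        Zt_succ x s m
      have hB : Zt x s (m+2)
          = (∑ j ∈ range (m+1), (Nat.choose m j : ℝ) * Zt x (s+1) j)
            + ∑ j ∈ range (m+1), (Nat.choose m j : ℝ) * Zt x (s+1) (j+1) := by
        rw [Zt_succ x s (m+1)]
        exact pascal_sum (Zt x (s+1)) m
      have hD : Zt x s (m+3)
          = ((∑ j ∈ range (m+1), (Nat.choose m j : ℝ) * Zt x (s+1) j)
            + ∑ j ∈ range (m+1), (Nat.choose m j : ℝ) * Zt x (s+1) (j+1))
            + ((∑ j ∈ range (m+1), (Nat.choose m j : ℝ) * Zt x (s+1) (j+1))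
            + ∑ j ∈ range (m+1), (Nat.choose m j : ℝ) * Zt x (s+1) (j+2)) := by
        rw [Zt_succ x s (m+2), pascal_sum (Zt x (s+1)) (m+1),
          pascal_sum (fun j => Zt x (s+1) (j+1)) m, ← pascal_sum (Zt x (s+1)) m]
      have key := cauchy_step (Zt x (s+1)) hynn m
        (fun j hj => ih j (by omega) (s+1))
      show Zt x s (m+2) ^ 2 ≤ Zt x s (m+1) * Zt x s (m+3)
      rw [hA, hB, hD]
      nlinarith [key]

theorem logConvex_stirling2_transform (x : ℕ → ℝ)
    (hx0 : ∀ n, 0 ≤ x n) (hx : LogConvex x) :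
    LogConvex (fun n => ∑ k ∈ Finset.range (n + 1), (stirling2 n k : ℝ) * x k) := by
  have hz : ∀ n, (∑ k ∈ Finset.range (n + 1), (stirling2 n k : ℝ) * x k) = Zt x 0 n :=
    fun n => Finset.sum_congr rfl fun k _ => by rw [Nat.add_zero]
  intro n
  simp only [hz]
  exact Zt_logConvex x hx0 hx n 0
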